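/- For a ∈ {1,…,2n} and b ∈ ℤ/2nℤ, let x(a,b) = (x(a,b)_c)_{c∈ℤ/2nℤ} be the tuple of 2n×2n complex matrices whose entry (x(a,b)_c)_{s,t} equals 1 if there exists an integer j with 0 ≤ j ≤ 2n−a, c = b+j in ℤ/2nℤ, s = a+j and t = 1+j, and equals 0 otherwise. Then for all a ∈ {1,…,2n}, b ∈ ℤ/2nℤ and i ∈ ℤ/2nℤ: Ω·(x(a,b)_{−i})ᵀ·Ω = (−1)^a · x(a, a−b)_i, where a−b is computed in ℤ/2nℤ. -/

import Mathlib

open Matrix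

/-- The Gram matrix Ω of the symplectic form: Ω_{s,t} = (−1)^{s+1} if s+t = 2n+1
(1-indexed) and 0 otherwise. -/
noncomputable def Omega (n : ℕ) : Matrix (Fin (2*n)) (Fin (2*n)) ℂ :=
  Matrix.of fun s t =>
    if ((s : ℕ) + 1) + ((t : ℕ) + 1) = 2*n + 1 then (-1 : ℂ)^((s : ℕ) + 1 + 1) else 0

open Classical in
/-- The basis element x(a,b) of 𝔤 = End(U_{[2n]}): the tuple of matrices whose
c-th component has (s,t)-entry 1 (1-indexed) iff there is 0 ≤ j ≤ 2n−a with
c = b+j, s = a+j and t = 1+j, and 0 otherwise. -/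
noncomputable def xgen (n a : ℕ) (b : ZMod (2*n)) :
    ZMod (2*n) → Matrix (Fin (2*n)) (Fin (2*n)) ℂ :=
  fun c => Matrix.of fun s t =>
    if ∃ j : ℕ, j ≤ 2*n - a ∧ c = b + (j : ZMod (2*n)) ∧
        (s : ℕ) + 1 = a + j ∧ (t : ℕ) + 1 = 1 + j
    then 1 else 0

lemma omega_mul_apply (n : ℕ) (M : Matrix (Fin (2*n)) (Fin (2*n)) ℂ) (s t : Fin (2*n)) :
    (Omega n * M) s t = (-1)^(s:ℕ) * M s.rev t := by
  rw [Matrix.mul_apply, Finset.sum_eq_single s.rev]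
  · have hs := s.is_lt
    show (if _ then _ else _) * _ = _
    rw [if_pos, pow_succ, pow_succ]
    · ring
    · rw [Fin.val_rev]; omega
  · intro k _ hk
    have hs := s.is_lt
    have hk' := k.is_lt
    show (if _ then _ else _) * _ = _
    rw [if_neg, zero_mul]
    intro h
    exact hk (Fin.ext (by rw [Fin.val_rev]; omega))
  · intro h; exact absurd (Finset.mem_univ _) h

lemma mul_omega_apply (n : ℕ) (M : Matrix (Fin (2*n)) (Fin (2*n)) ℂ) (s t : Fin (2*n)) :
    (M * Omega n) s t = (-1)^((t.rev:ℕ)) * M s t.rev := by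
  rw [Matrix.mul_apply, Finset.sum_eq_single t.rev]
  · have ht := t.is_lt
    show _ * (if _ then _ else _) = _
    rw [if_pos, pow_succ, pow_succ]
    · ring
    · rw [Fin.val_rev]; omega
  · intro k _ hk
    have ht := t.is_lt
    have hk' := k.is_lt
    show _ * (if _ then _ else _) = _
    rw [if_neg, mul_zero]
    intro h
    exact hk (Fin.ext (by rw [Fin.val_rev]; omega))
  · intro h; exact absurd (Finset.mem_univ _) h

/-- Ω·(x(a,b)_{−i})ᵀ·Ω = (−1)^a · x(a, a−b)_i for all a ∈ {1,…,2n},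
b ∈ ℤ/2nℤ and i ∈ ℤ/2nℤ. -/
theorem statement13 (n : ℕ) (hn : 1 ≤ n) (a : ℕ) (ha1 : 1 ≤ a) (ha2 : a ≤ 2*n)
    (b i : ZMod (2*n)) :
    Omega n * (xgen n a b (-i))ᵀ * Omega n
      = ((-1 : ℂ)^a) • xgen n a ((a : ZMod (2*n)) - b) i := by
  ext s t
  rw [Matrix.smul_apply, mul_omega_apply, omega_mul_apply, Matrix.transpose_apply]
  have hs := s.is_lt
  have ht := t.is_lt
  have hsr : (s.rev : ℕ) = 2*n - (s + 1) := Fin.val_rev s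
  have htr : (t.rev : ℕ) = 2*n - (t + 1) := Fin.val_rev t
  -- cast fact
  have hcast : ∀ m : ℕ, m + (a + (t:ℕ)) = 2*n →
      (m : ZMod (2*n)) = -(a:ZMod (2*n)) - ((t:ℕ) : ZMod (2*n)) := by
    intro m hm
    have h0 : ((m + (a + (t:ℕ)) : ℕ) : ZMod (2*n)) = 0 := by
      rw [hm]; exact ZMod.natCast_self _
    push_cast at h0
    linear_combination h0
  have key : (∃ j : ℕ, j ≤ 2*n - a ∧ -i = b + (j : ZMod (2*n)) ∧
        (t.rev : ℕ) + 1 = a + j ∧ (s.rev : ℕ) + 1 = 1 + j) ↔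
      (∃ j : ℕ, j ≤ 2*n - a ∧ i = ((a:ZMod (2*n)) - b) + (j : ZMod (2*n)) ∧
        (s : ℕ) + 1 = a + j ∧ (t : ℕ) + 1 = 1 + j) := by
    constructor
    · rintro ⟨j, hj1, hj2, hj3, hj4⟩
      have hj : j = 2*n - a - (t:ℕ) := by omega
      have hst : (s:ℕ) + 1 = a + (t:ℕ) := by omega
      refine ⟨(t:ℕ), by omega, ?_, hst, by omega⟩
      have hc := hcast j (by omega)
      rw [hc] at hj2
      linear_combination -hj2
    · rintro ⟨j, hj1, hj2, hj3, hj4⟩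
      have hjt : j = (t:ℕ) := by omega
      subst hjt
      refine ⟨2*n - a - (t:ℕ), by omega, ?_, by omega, by omega⟩
      rw [hcast (2*n - a - (t:ℕ)) (by omega)]
      linear_combination -hj2
  show _ = _ * @ite ℂ _ _ 1 0
  by_cases h : ∃ j : ℕ, j ≤ 2*n - a ∧ i = ((a:ZMod (2*n)) - b) + (j : ZMod (2*n)) ∧
      (s : ℕ) + 1 = a + j ∧ (t : ℕ) + 1 = 1 + j
  · rw [if_pos h]
    show _ * (_ * @ite ℂ _ _ 1 0) = _
    rw [if_pos (key.mpr h), mul_one, mul_one]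
    obtain ⟨j, hj1, hj2, hj3, hj4⟩ := h
    clear key hcast hj2
    have hexp : (t.rev:ℕ) + (s:ℕ) = a + 2*(n-1) := by omega
    rw [← pow_add, hexp, pow_add, pow_mul, neg_one_sq, one_pow, mul_one]
  · rw [if_neg h]
    show _ * (_ * @ite ℂ _ _ 1 0) = _
    rw [if_neg (fun hc => h (key.mp hc)), mul_zero, mul_zero, mul_zero]
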